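/- Fix an integer m ≥ 1 and x ∈ (0,1). Let g : [0,1] → ℝ be any integrable function satisfying ∫_0^1 z^h g(z) dz = 1 for all h = 0, 1, …, m-1 and ∫_0^1 g(z)² dz < ∞. Define g^x(z) := g(z/x)·1_{[0,x]}(z) and the piecewise function w̃(z) := g^x(z) for z ≤ x and w̃(z) := g^{1-x}(1-z) for z > x. Then w̃ satisfies the moment constraints ∫_0^1 z^h w̃(z) dz = x^h for all h = 0, 1, …, m-1, and its squared L²-norm equals that of g: ∫_0^1 w̃(z)² dz = ∫_0^1 g(z)² dz. -/

import Mathlib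

open MeasureTheory

/-- If `g` is square-integrable on `[0,1]` with `∫_0^1 z^h g(z) dz = 1` for
`h = 0,…,m-1`, and `x ∈ (0,1)`, then the piecewise function
`w̃(z) = g^x(z)` for `z ≤ x`, `w̃(z) = g^{1-x}(1-z)` for `z > x`
(where `g^a(z) := g(z/a)·1_{[0,a]}(z)`) satisfies the moment constraints
`∫_0^1 z^h w̃(z) dz = x^h` for `h = 0,…,m-1`, and `∫_0^1 w̃(z)² dz = ∫_0^1 g(z)² dz`. -/
theorem piecewise_transfer_of_moment_function
    (m : ℕ) (hm : 1 ≤ m) (x : ℝ) (hx : x ∈ Set.Ioo (0 : ℝ) 1)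
    (g : ℝ → ℝ)
    (hgint : IntegrableOn g (Set.Icc (0 : ℝ) 1))
    (hgsq : IntegrableOn (fun z => (g z) ^ 2) (Set.Icc (0 : ℝ) 1))
    (hmom : ∀ h < m, ∫ z in Set.Icc (0 : ℝ) 1, z ^ h * g z = 1)
    (gs : ℝ → ℝ → ℝ)
    (hgs : gs = fun a z => if z ∈ Set.Icc (0 : ℝ) a then g (z / a) else 0)
    (wt : ℝ → ℝ)
    (hwt : wt = fun z => if z ≤ x then gs x z else gs (1 - x) (1 - z)) :
    (∀ h < m, ∫ z in Set.Icc (0 : ℝ) 1, z ^ h * wt z = x ^ h) ∧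
      (∫ z in Set.Icc (0 : ℝ) 1, (wt z) ^ 2) = ∫ z in Set.Icc (0 : ℝ) 1, (g z) ^ 2 := by
  obtain ⟨hx0, hx1⟩ := hx
  have hxne : x ≠ 0 := ne_of_gt hx0
  have h1x : (0:ℝ) < 1 - x := by linarith
  have h1xne : (1:ℝ) - x ≠ 0 := ne_of_gt h1x
  have hgI : IntervalIntegrable g volume 0 1 := by
    rw [intervalIntegrable_iff_integrableOn_Ioc_of_le zero_le_one]
    exact hgint.mono_set Set.Ioc_subset_Icc_self
  have hgsqI : IntervalIntegrable (fun z => (g z)^2) volume 0 1 := by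
    rw [intervalIntegrable_iff_integrableOn_Ioc_of_le zero_le_one]
    exact hgsq.mono_set Set.Ioc_subset_Icc_self
  have hmomI : ∀ h < m, ∫ v in (0:ℝ)..1, v ^ h * g v = 1 := by
    intro h hh
    rw [intervalIntegral.integral_of_le zero_le_one, ← MeasureTheory.integral_Icc_eq_integral_Ioc]
    exact hmom h hh
  -- generic splitting + substitution lemma
  have split : ∀ (Φ F1 F2 : ℝ → ℝ), IntervalIntegrable F1 volume 0 1 →
      IntervalIntegrable F2 volume 0 1 →
      (∀ z ∈ Set.Icc (0:ℝ) x, Φ z = F1 (z / x)) →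
      (∀ z ∈ Set.Icc x (1:ℝ), Φ z = F2 ((1 - z) / (1 - x))) →
      ∫ z in Set.Icc (0:ℝ) 1, Φ z
        = x * (∫ v in (0:ℝ)..1, F1 v) + (1 - x) * ∫ v in (0:ℝ)..1, F2 v := by
    intro Φ F1 F2 hF1 hF2 hEq1 hEq2
    have hF1c : IntervalIntegrable (fun z => F1 (z / x)) volume 0 x := by
      have h := hF1.comp_mul_right (c := x⁻¹)
      simpa [div_eq_mul_inv, inv_inv, hxne] using h
    have hF2c : IntervalIntegrable (fun z => F2 ((1 - z) / (1 - x))) volume x 1 := by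
      have h0 : IntervalIntegrable (fun u => F2 (u / (1 - x))) volume 0 (1 - x) := by
        have h := hF2.comp_mul_right (c := (1 - x)⁻¹)
        simpa [div_eq_mul_inv, inv_inv, h1xne] using h
      have h1 := h0.comp_sub_left 1
      simpa using h1.symm
    have hΦ1 : IntervalIntegrable Φ volume 0 x := by
      rw [intervalIntegrable_iff_integrableOn_Ioc_of_le hx0.le] at hF1c ⊢
      exact hF1c.congr_fun
        (fun z hz => (hEq1 z (Set.Ioc_subset_Icc_self hz)).symm) measurableSet_Ioc
    have hΦ2 : IntervalIntegrable Φ volume x 1 := by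
      rw [intervalIntegrable_iff_integrableOn_Ioc_of_le hx1.le] at hF2c ⊢
      exact hF2c.congr_fun
        (fun z hz => (hEq2 z (Set.Ioc_subset_Icc_self hz)).symm) measurableSet_Ioc
    have c1 : ∫ z in (0:ℝ)..x, Φ z = x * (∫ v in (0:ℝ)..1, F1 v) := by
      rw [intervalIntegral.integral_congr (g := fun z => F1 (z / x))
        (by rw [Set.uIcc_of_le hx0.le]; exact hEq1)]
      rw [intervalIntegral.integral_comp_div (f := F1) hxne, zero_div, div_self hxne,
        smul_eq_mul]
    have c2 : ∫ z in x..(1:ℝ), Φ z = (1 - x) * ∫ v in (0:ℝ)..1, F2 v := by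
      rw [intervalIntegral.integral_congr (g := fun z => (fun u => F2 (u / (1 - x))) (1 - z))
        (by rw [Set.uIcc_of_le hx1.le]; exact hEq2)]
      rw [intervalIntegral.integral_comp_sub_left (fun u => F2 (u / (1 - x))) 1]
      rw [show (1:ℝ) - 1 = 0 by ring]
      rw [intervalIntegral.integral_comp_div (f := F2) h1xne, zero_div, div_self h1xne,
        smul_eq_mul]
    rw [MeasureTheory.integral_Icc_eq_integral_Ioc,
      ← intervalIntegral.integral_of_le zero_le_one,
      ← intervalIntegral.integral_add_adjacent_intervals hΦ1 hΦ2, c1, c2]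
  -- pointwise descriptions of wt
  have hwt1 : ∀ z ∈ Set.Icc (0:ℝ) x, wt z = g (z / x) := by
    intro z hz
    rw [hwt]
    simp only
    rw [if_pos hz.2, hgs]
    simp only
    rw [if_pos hz]
  have hwt2 : ∀ z ∈ Set.Icc x (1:ℝ), wt z = g ((1 - z) / (1 - x)) := by
    intro z hz
    by_cases hzx : z ≤ x
    · have hzex : z = x := le_antisymm hzx hz.1
      subst hzex
      rw [hwt]
      simp only
      rw [if_pos le_rfl, hgs]
      simp only
      rw [if_pos ⟨hx0.le, le_rfl⟩, div_self hxne, div_self h1xne]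
    · rw [hwt]
      simp only
      rw [if_neg hzx, hgs]
      simp only
      rw [if_pos ⟨by linarith [hz.2], by linarith [hz.1]⟩]
  constructor
  · intro h hh
    have hF1i : IntervalIntegrable (fun v => (x * v) ^ h * g v) volume 0 1 :=
      hgI.continuousOn_mul (((continuous_const.mul continuous_id).pow h).continuousOn)
    have hF2i : IntervalIntegrable (fun v => (1 - (1 - x) * v) ^ h * g v) volume 0 1 :=
      hgI.continuousOn_mul
        (((continuous_const.sub (continuous_const.mul continuous_id)).pow h).continuousOn)
    have e1 : ∀ z ∈ Set.Icc (0:ℝ) x, z ^ h * wt z = (fun v => (x * v) ^ h * g v) (z / x) := by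
      intro z hz
      rw [hwt1 z hz]
      simp only
      rw [show x * (z / x) = z by field_simp]
    have e2 : ∀ z ∈ Set.Icc x (1:ℝ),
        z ^ h * wt z = (fun v => (1 - (1 - x) * v) ^ h * g v) ((1 - z) / (1 - x)) := by
      intro z hz
      rw [hwt2 z hz]
      simp only
      rw [show 1 - (1 - x) * ((1 - z) / (1 - x)) = z by field_simp; ring]
    rw [split (fun z => z ^ h * wt z) _ _ hF1i hF2i e1 e2]
    have i1 : ∫ v in (0:ℝ)..1, (x * v) ^ h * g v = x ^ h := by
      simp only [mul_pow]
      rw [show (fun v => x ^ h * v ^ h * g v) = (fun v => x ^ h * (v ^ h * g v)) by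
        funext v; ring]
      rw [intervalIntegral.integral_const_mul, hmomI h hh, mul_one]
    have i2 : ∫ v in (0:ℝ)..1, (1 - (1 - x) * v) ^ h * g v = x ^ h := by
      have hrw : (fun v => (1 - (1 - x) * v) ^ h * g v)
          = fun v => ∑ k ∈ Finset.range (h + 1),
              (x - 1) ^ k * (h.choose k : ℝ) * (v ^ k * g v) := by
        funext v
        rw [show (1 - (1 - x) * v) = ((x - 1) * v + 1) by ring, add_pow, Finset.sum_mul]
        refine Finset.sum_congr rfl fun k _ => ?_
        rw [mul_pow, one_pow]
        ring
      rw [hrw, intervalIntegral.integral_finset_sum]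
      · have hterm : ∀ k ∈ Finset.range (h + 1),
            ∫ v in (0:ℝ)..1, (x - 1) ^ k * (h.choose k : ℝ) * (v ^ k * g v)
              = (x - 1) ^ k * 1 ^ (h - k) * (h.choose k : ℝ) := by
          intro k hk
          rw [intervalIntegral.integral_const_mul,
            hmomI k (lt_of_le_of_lt (Nat.lt_succ_iff.mp (Finset.mem_range.mp hk)) hh),
            mul_one, one_pow, mul_one]
        rw [Finset.sum_congr rfl hterm, ← add_pow]
        norm_num
      · intro k _
        exact (hgI.continuousOn_mul ((continuous_pow k).continuousOn)).const_mul _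
    rw [i1, i2]
    ring
  · have e1 : ∀ z ∈ Set.Icc (0:ℝ) x, (wt z) ^ 2 = (fun v => (g v) ^ 2) (z / x) := by
      intro z hz; rw [hwt1 z hz]
    have e2 : ∀ z ∈ Set.Icc x (1:ℝ), (wt z) ^ 2 = (fun v => (g v) ^ 2) ((1 - z) / (1 - x)) := by
      intro z hz; rw [hwt2 z hz]
    rw [split (fun z => (wt z) ^ 2) _ _ hgsqI hgsqI e1 e2,
      MeasureTheory.integral_Icc_eq_integral_Ioc,
      ← intervalIntegral.integral_of_le zero_le_one]
    ring
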